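/- Let Δ be a finite simple graph with vertex set {a_1,…,a_k}, C a proper coloring of Δ, and (Γ, γ_1,…,γ_k) a Δ-halo for C. If a_i and a_j are adjacent in Δ (so that γ_i and γ_j are vertex-disjoint cycles in Γ), then the elements w_i and w_j of G(Δ_Γ) commute, where w_l denotes the product, in traversal order, of the generators of G(Δ_Γ) corresponding to the successive edges of the cycle γ_l. Consequently, the assignment a_i ↦ w_i² extends to a group homomorphism Ψ : G(Δ) → G(Δ_Γ). -/

import Mathlib

def raagRels {V : Type*} (G : SimpleGraph V) : Set (FreeGroup V) :=
  {r | ∃ a b : V, G.Adj a b ∧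
    r = FreeGroup.of a * FreeGroup.of b * (FreeGroup.of a)⁻¹ * (FreeGroup.of b)⁻¹}

abbrev RAAG {V : Type*} (G : SimpleGraph V) : Type _ :=
  PresentedGroup (raagRels G)

def raagGen {V : Type*} (G : SimpleGraph V) (v : V) : RAAG G :=
  PresentedGroup.of v

def opLineGraph {W : Type*} (Γ : SimpleGraph W) : SimpleGraph Γ.edgeSet where
  Adj e f := (e : Sym2 W) ≠ (f : Sym2 W) ∧ ∀ v : W, v ∈ (e : Sym2 W) → v ∉ (f : Sym2 W)
  symm := by
    constructor
    rintro e f ⟨hne, h⟩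
    exact ⟨hne.symm, fun v hv hv' => h v hv' hv⟩
  loopless := by
    constructor
    rintro e ⟨hne, -⟩
    exact hne rfl

def walkWord {W : Type*} {Γ : SimpleGraph W} {u v : W} (p : Γ.Walk u v) :
    RAAG (opLineGraph Γ) :=
  (p.darts.map fun d => raagGen (opLineGraph Γ) ⟨d.edge, d.edge_mem⟩).prod

structure IsHalo {k n : ℕ} (Δ : SimpleGraph (Fin k)) (C : SimpleGraph.Coloring Δ (Fin n))
    {W : Type*} (Γ : SimpleGraph W) (base : Fin k → W)
    (γ : ∀ i : Fin k, Γ.Walk (base i) (base i)) (x : Fin n → W) : Prop where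
  finite : Finite W
  connected : Γ.Connected
  isCycle : ∀ i : Fin k, (γ i).IsCycle
  color_mem : ∀ (c : Fin n) (i : Fin k), x c ∈ (γ i).support ↔ C i = c
  nonadj_unique : ∀ i j : Fin k, i ≠ j → ¬ Δ.Adj i j →
    ∃! v : W, v ∈ (γ i).support ∧ v ∈ (γ j).support
  nonadj_same_color : ∀ i j : Fin k, i ≠ j → ¬ Δ.Adj i j → C i = C j →
    ∀ v : W, v ∈ (γ i).support → v ∈ (γ j).support → v = x (C i)
  nonadj_diff_color : ∀ i j : Fin k, i ≠ j → ¬ Δ.Adj i j → C i ≠ C j →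
    ∀ v : W, v ∈ (γ i).support → v ∈ (γ j).support →
      ∀ l : Fin k, l ≠ i → l ≠ j → v ∉ (γ l).support
  adj_disjoint : ∀ i j : Fin k, Δ.Adj i j → ∀ v : W, v ∈ (γ i).support → v ∉ (γ j).support

lemma raag_adj_commute {V : Type*} (G : SimpleGraph V) {a b : V} (h : G.Adj a b) :
    Commute (raagGen G a) (raagGen G b) := by
  have hr : (FreeGroup.of a * FreeGroup.of b * (FreeGroup.of a)⁻¹ * (FreeGroup.of b)⁻¹)
      ∈ raagRels G := ⟨a, b, h, rfl⟩
  have h1 : (QuotientGroup.mk (s := Subgroup.normalClosure (raagRels G))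
      (FreeGroup.of a * FreeGroup.of b * (FreeGroup.of a)⁻¹ * (FreeGroup.of b)⁻¹) :
      PresentedGroup (raagRels G)) = 1 :=
    (QuotientGroup.eq_one_iff _).2 (Subgroup.subset_normalClosure hr)
  have h2 : raagGen G a * raagGen G b * (raagGen G a)⁻¹ * (raagGen G b)⁻¹ = 1 := by
    simp only [raagGen, PresentedGroup.of, ← map_mul, ← map_inv]
    exact h1
  rw [mul_inv_eq_one, mul_inv_eq_iff_eq_mul] at h2
  exact h2

lemma mem_support_of_mem_dart_edge {W : Type*} {Γ : SimpleGraph W} {u v : W}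
    {p : Γ.Walk u v} {d : Γ.Dart} (hd : d ∈ p.darts) {w : W} (hw : w ∈ d.edge) :
    w ∈ p.support := by
  rw [SimpleGraph.Dart.edge, Sym2.mem_iff] at hw
  rcases hw with rfl | rfl
  · exact p.dart_fst_mem_support_of_mem_darts hd
  · exact p.dart_snd_mem_support_of_mem_darts hd

/-- In a `Δ`-halo, if `a i` and `a j` are adjacent in `Δ` then the
edge-words `w i` and `w j` of the (vertex-disjoint) cycles `γ i` and `γ j` commute in
`G(Δ_Γ)`; consequently `a i ↦ (w i)²` extends to a homomorphism `Ψ : G(Δ) → G(Δ_Γ)`. -/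
theorem halo_words_commute_and_hom {k n : ℕ} (Δ : SimpleGraph (Fin k))
    (C : SimpleGraph.Coloring Δ (Fin n)) {W : Type*} (Γ : SimpleGraph W)
    (base : Fin k → W) (γ : ∀ i : Fin k, Γ.Walk (base i) (base i)) (x : Fin n → W)
    (h : IsHalo Δ C Γ base γ x) :
    (∀ i j : Fin k, Δ.Adj i j → Commute (walkWord (γ i)) (walkWord (γ j))) ∧
    ∃ Ψ : RAAG Δ →* RAAG (opLineGraph Γ),
      ∀ i : Fin k, Ψ (raagGen Δ i) = (walkWord (γ i)) ^ 2 := by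
  have comm : ∀ i j : Fin k, Δ.Adj i j → Commute (walkWord (γ i)) (walkWord (γ j)) := by
    intro i j hij
    unfold walkWord
    apply Commute.list_prod_left
    intro a ha
    rw [List.mem_map] at ha
    obtain ⟨d, hd, rfl⟩ := ha
    apply Commute.list_prod_right
    intro b hb
    rw [List.mem_map] at hb
    obtain ⟨e, he, rfl⟩ := hb
    apply raag_adj_commute
    constructor
    · intro hedge
      have h1 : d.fst ∈ (γ i).support :=
        (γ i).dart_fst_mem_support_of_mem_darts hd
      have h2 : d.fst ∈ (γ j).support := by
        apply mem_support_of_mem_dart_edge he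
        have hedge' : d.edge = e.edge := hedge
        rw [← hedge']
        exact Sym2.mem_mk_left _ _
      exact h.adj_disjoint i j hij _ h1 h2
    · intro v hv hv'
      have h1 : v ∈ (γ i).support := mem_support_of_mem_dart_edge hd hv
      have h2 : v ∈ (γ j).support := mem_support_of_mem_dart_edge he hv'
      exact h.adj_disjoint i j hij _ h1 h2
  refine ⟨comm, ?_⟩
  have hrel : ∀ r ∈ raagRels Δ,
      FreeGroup.lift (fun i => (walkWord (γ i)) ^ 2) r = 1 := by
    rintro r ⟨a, b, hab, rfl⟩
    simp only [map_mul, map_inv, FreeGroup.lift_apply_of]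
    rw [mul_inv_eq_one, mul_inv_eq_iff_eq_mul]
    exact ((comm a b hab).pow_pow 2 2)
  exact ⟨PresentedGroup.toGroup hrel, fun i => PresentedGroup.toGroup.of hrel⟩
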